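/- Let u solve the damped BBM equation and define G(t) = |u(t)|_γ / ‖u(t)‖_{H¹} (for u(t) ≠ 0). Then ‖u(t)‖_{H¹}² = e^{−2∫₀^t G²(s)ds} ‖u₀‖_{H¹}² and |u(t)|_γ² = G²(t) e^{−2∫₀^t G²(s)ds} ‖u₀‖_{H¹}². In particular ‖u(t)‖_{H¹} → 0 as t → ∞ if and only if G ∉ L²(0,∞). -/

import Mathlib

open MeasureTheory

/-- Let `u` solve damped BBM, `N t = ‖u(t)‖_{H¹}²`, `g t = |u(t)|_γ²`,
and `G t = |u(t)|_γ/‖u(t)‖_{H¹}` (C¹), with the energy identity `(1/2)N' + g = 0`. Then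
`N t = e^{-2∫₀ᵗ G²} N 0`, `g t = G(t)² e^{-2∫₀ᵗ G²} N 0`, and `N → 0` at infinity iff
`G ∉ L²(0,∞)`. -/
theorem stmt15 (N g G : ℝ → ℝ)
    (hNpos : ∀ t, 0 < N t) (hgnn : ∀ t, 0 ≤ g t)
    (hG : ∀ t, G t = Real.sqrt (g t) / Real.sqrt (N t))
    (hGC1 : ContDiff ℝ 1 G)
    (henergy : ∀ t, HasDerivAt N (-2 * g t) t) :
    (∀ t, N t = Real.exp (-2 * ∫ s in (0 : ℝ)..t, G s ^ 2) * N 0) ∧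
    (∀ t, g t = G t ^ 2 * Real.exp (-2 * ∫ s in (0 : ℝ)..t, G s ^ 2) * N 0) ∧
    (Filter.Tendsto N Filter.atTop (nhds 0) ↔
      ¬ IntegrableOn (fun s => G s ^ 2) (Set.Ici (0 : ℝ)) volume) := by
  have hGcont : Continuous fun s => G s ^ 2 := (hGC1.continuous).pow 2
  set F : ℝ → ℝ := fun t => ∫ s in (0 : ℝ)..t, G s ^ 2 with hF
  have hFderiv : ∀ t, HasDerivAt F (G t ^ 2) t := fun t =>
    intervalIntegral.integral_hasDerivAt_right (hGcont.intervalIntegrable _ _)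
      (hGcont.aestronglyMeasurable.stronglyMeasurableAtFilter) hGcont.continuousAt
  have hG2 : ∀ t, G t ^ 2 * N t = g t := by
    intro t
    rw [hG t, div_pow, Real.sq_sqrt (hgnn t), Real.sq_sqrt (hNpos t).le,
      div_mul_cancel₀ _ (hNpos t).ne']
  -- constant: N t * exp (2 * F t)
  have hconst : ∀ t, N t * Real.exp (2 * F t) = N 0 := by
    have hder : ∀ t, HasDerivAt (fun t => N t * Real.exp (2 * F t)) 0 t := by
      intro t
      have h1 : HasDerivAt (fun t => Real.exp (2 * F t))
          (Real.exp (2 * F t) * (2 * G t ^ 2)) t :=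
        (((hFderiv t).const_mul 2).exp)
      have := (henergy t).mul h1
      refine this.congr_deriv ?_
      rw [← hG2 t]; ring
    have hd : ∀ t, deriv (fun t => N t * Real.exp (2 * F t)) t = 0 := fun t => (hder t).deriv
    have := is_const_of_deriv_eq_zero (fun t => (hder t).differentiableAt) hd
    intro t
    have h0 : F 0 = 0 := intervalIntegral.integral_same
    calc N t * Real.exp (2 * F t) = N 0 * Real.exp (2 * F 0) := this t 0
      _ = N 0 := by rw [h0]; simp
  have hNformula : ∀ t, N t = Real.exp (-2 * F t) * N 0 := by
    intro t
    rw [← hconst t, neg_mul, Real.exp_neg]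
    field_simp
  refine ⟨hNformula, fun t => by rw [mul_assoc, ← hNformula t, hG2 t], ?_⟩
  -- monotonicity of F
  have hFmono : Monotone F := by
    intro a b hab
    have h := intervalIntegral.integral_add_adjacent_intervals
      (hGcont.intervalIntegrable (μ := volume) 0 a) (hGcont.intervalIntegrable a b)
    have hnn := intervalIntegral.integral_nonneg (μ := volume) hab (fun s _ => sq_nonneg (G s))
    simp only [hF]
    linarith
  constructor
  · -- N → 0 implies not integrable
    intro hN hint
    rw [integrableOn_Ici_iff_integrableOn_Ioi] at hint
    have hFle : ∀ t, 0 ≤ t → F t ≤ ∫ s in Set.Ioi (0:ℝ), G s ^ 2 := by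
      intro t ht
      show (∫ s in (0:ℝ)..t, G s ^ 2) ≤ _
      rw [intervalIntegral.integral_of_le ht]
      exact setIntegral_mono_set hint
        (Filter.Eventually.of_forall fun s => sq_nonneg (G s))
        (Filter.Eventually.of_forall fun s hs => Set.mem_Ioi.mpr hs.1)
    set C := ∫ s in Set.Ioi (0:ℝ), G s ^ 2
    have hlow : ∀ t, 0 ≤ t → Real.exp (-2 * C) * N 0 ≤ N t := by
      intro t ht
      rw [hNformula t]
      exact mul_le_mul_of_nonneg_right
        (Real.exp_le_exp.mpr (by nlinarith [hFle t ht])) (hNpos 0).le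
    have hpos : 0 < Real.exp (-2 * C) * N 0 := mul_pos (Real.exp_pos _) (hNpos 0)
    have := hN.eventually (eventually_lt_nhds hpos) |>.and
      (Filter.eventually_ge_atTop (0:ℝ))
    obtain ⟨t, h1, h2⟩ := this.exists
    exact absurd (hlow t h2) (not_le.mpr h1)
  · -- not integrable implies N → 0
    intro hint
    have hFtop : Filter.Tendsto F Filter.atTop Filter.atTop := by
      refine Filter.tendsto_atTop_atTop_of_monotone hFmono ?_
      by_contra h
      push_neg at h
      obtain ⟨C, hC⟩ := h
      apply hint
      rw [integrableOn_Ici_iff_integrableOn_Ioi]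
      refine integrableOn_Ioi_of_intervalIntegral_norm_bounded C 0
        (fun i : ℝ => hGcont.integrableOn_Ioc) Filter.tendsto_id
        (Filter.Eventually.of_forall fun i => ?_)
      calc (∫ s in (0:ℝ)..i, ‖G s ^ 2‖) = F i := by
            simp_rw [hF, Real.norm_eq_abs, abs_pow, sq_abs]
        _ ≤ C := (hC i).le
    have : Filter.Tendsto (fun t => Real.exp (-2 * F t) * N 0) Filter.atTop (nhds 0) := by
      have h1 : Filter.Tendsto (fun t => Real.exp (-2 * F t)) Filter.atTop (nhds 0) := by
        rw [Real.tendsto_exp_comp_nhds_zero]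
        have h2 : Filter.Tendsto (fun t => 2 * F t) Filter.atTop Filter.atTop :=
          hFtop.const_mul_atTop two_pos
        have h3 := Filter.tendsto_neg_atTop_atBot.comp h2
        simpa [neg_mul, Function.comp_def] using h3
      simpa using h1.mul_const (N 0)
    exact this.congr (fun t => (hNformula t).symm)
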